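/- arXiv:0809.3602 — 5 statements merged into one kernel-verified Lean document; each statement's English description precedes it below -/
import Mathlib

section
/- Let n ≥ 2, let λ_1 ≤ λ_2 ≤ … ≤ λ_n be real numbers, and let ξ ∈ ℝ^n be nonzero. Then the polynomial I_ξ(t) = Σ_{i=1}^n ξ_i² Π_i(t) has degree exactly n−1 (its leading coefficient is (−1)^{n−1} Σ_i ξ_i² ≠ 0), all of its complex roots are real, and if t_1 ≤ t_2 ≤ … ≤ t_{n−1} denote its roots listed with multiplicity, then λ_i ≤ t_i ≤ λ_{i+1} for every i = 1, …, n−1. -/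
open Polynomial

/-- `Π_i(t) = ∏_{j ≠ i} (λ_j − t)` as a real polynomial in `t`. -/
noncomputable def PiPoly (n : ℕ) (lam : Fin n → ℝ) (i : Fin n) : Polynomial ℝ :=
  ∏ j ∈ Finset.univ.erase i, (C (lam j) - X)

/-- `I_ξ(t) = Σ_{i=1}^n ξ_i² Π_i(t)` as a real polynomial in `t`. -/
noncomputable def IPoly (n : ℕ) (lam : Fin n → ℝ) (ξ : Fin n → ℝ) : Polynomial ℝ :=
  ∑ i, C ((ξ i) ^ 2) * PiPoly n lam i

section Aux
open Finset

lemma aux_sign_prod (u : Finset ℝ) : ∀ x : ℝ, x ∉ u →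
    0 < (-1 : ℝ) ^ (u.filter (fun v => v < x)).card * ∏ v ∈ u, (v - x) := by
  induction u using Finset.induction_on with
  | empty => simp
  | @insert a u ha ih =>
    intro x hx
    have hxa : x ≠ a := fun h => hx (by simp [h])
    have hxu : x ∉ u := fun h => hx (Finset.mem_insert_of_mem h)
    have IH := ih x hxu
    rw [Finset.filter_insert, Finset.prod_insert ha]
    by_cases hax : a < x
    · rw [if_pos hax, Finset.card_insert_of_notMem (fun h => ha (Finset.filter_subset _ _ h))]
      have : (-1 : ℝ) ^ ((u.filter (fun v => v < x)).card + 1) * ((a - x) * ∏ v ∈ u, (v - x))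
          = (x - a) * ((-1 : ℝ) ^ (u.filter (fun v => v < x)).card * ∏ v ∈ u, (v - x)) := by
        rw [pow_succ]; ring
      rw [this]
      exact mul_pos (by linarith) IH
    · rw [if_neg hax]
      have hax' : x < a := lt_of_le_of_ne (not_lt.mp hax) hxa
      have : (-1 : ℝ) ^ (u.filter (fun v => v < x)).card * ((a - x) * ∏ v ∈ u, (v - x))
          = (a - x) * ((-1 : ℝ) ^ (u.filter (fun v => v < x)).card * ∏ v ∈ u, (v - x)) := by ring
      rw [this]
      exact mul_pos (by linarith) IH

lemma aux_root_between (P : Polynomial ℝ) {a b : ℝ} (hab : a < b)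
    (h : P.eval a * P.eval b < 0) : ∃ c, a < c ∧ c < b ∧ P.eval c = 0 := by
  have hc : ContinuousOn (fun x => P.eval x) (Set.Icc a b) := (P.continuous).continuousOn
  rcases lt_or_ge (P.eval a) 0 with h1 | h1
  · have h2 : 0 < P.eval b := by nlinarith
    have := intermediate_value_Ioo hab.le hc (Set.mem_Ioo.mpr ⟨h1, h2⟩)
    obtain ⟨c, hc1, hc2⟩ := this
    exact ⟨c, hc1.1, hc1.2, hc2⟩
  · have h2 : P.eval b < 0 := by nlinarith
    have h1' : 0 < P.eval a := by nlinarith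
    have := intermediate_value_Ioo' hab.le hc (Set.mem_Ioo.mpr ⟨h2, h1'⟩)
    obtain ⟨c, hc1, hc2⟩ := this
    exact ⟨c, hc1.1, hc1.2, hc2⟩

lemma aux_sorted_getD_le {x : ℝ} : ∀ (l : List ℝ), l.Pairwise (· ≤ ·) →
    ∀ i : ℕ, i < l.countP (fun a => decide (a ≤ x)) → l.getD i 0 ≤ x := by
  intro l
  induction l with
  | nil => simp
  | cons a l ih =>
    intro hs i hi
    rcases List.pairwise_cons.mp hs with ⟨ha, hl⟩
    cases i with
    | zero =>
      simp only [List.getD_cons_zero]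
      by_contra hax
      have : (a :: l).countP (fun a => decide (a ≤ x)) = 0 := by
        rw [List.countP_eq_zero]
        intro b hb
        rcases List.mem_cons.mp hb with rfl | hb'
        · simpa using hax
        · have := ha b hb'
          simp only [decide_eq_true_eq]
          intro h; exact hax (le_trans this h)
      omega
    | succ i =>
      simp only [List.getD_cons_succ]
      apply ih hl
      rw [List.countP_cons] at hi
      have : (if (decide (a ≤ x)) = true then 1 else 0) ≤ 1 := by split <;> simp
      omega

lemma aux_sorted_le_getD {x : ℝ} : ∀ (l : List ℝ), l.Pairwise (· ≤ ·) →
    ∀ i : ℕ, i < l.length → l.countP (fun a => decide (a < x)) ≤ i → x ≤ l.getD i 0 := by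
  intro l
  induction l with
  | nil => simp
  | cons a l ih =>
    intro hs i hil hi
    rcases List.pairwise_cons.mp hs with ⟨ha, hl⟩
    cases i with
    | zero =>
      simp only [List.getD_cons_zero]
      by_contra hax
      push_neg at hax
      have : 0 < (a :: l).countP (fun a => decide (a < x)) := by
        apply List.countP_pos_iff.mpr
        exact ⟨a, List.mem_cons_self, by simpa using hax⟩
      omega
    | succ i =>
      simp only [List.getD_cons_succ]
      apply ih hl i (by simpa using Nat.lt_of_succ_lt_succ hil)
      by_cases hax : a < x
      · rw [List.countP_cons] at hi
        simp only [hax, decide_eq_true_eq, if_pos, decide_true] at hi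
        omega
      · have : l.countP (fun a => decide (a < x)) = 0 := by
          rw [List.countP_eq_zero]
          intro b hb
          simp only [decide_eq_true_eq]
          intro h
          exact hax (lt_of_le_of_lt (ha b hb) h)
        omega


lemma aux_roots_CsubX (a : ℝ) : (C a - X).roots = {a} := by
  have h : (C a - X) = C (-1 : ℝ) * (X - C a) := by
    rw [map_neg, map_one]; ring
  rw [h, roots_C_mul _ (by norm_num), roots_X_sub_C]

lemma aux_neg_prod' {ι : Type*} (e : Finset ι) (f : ι → ℝ) :
    (∏ j ∈ e, (C (f j) - X)) = C ((-1:ℝ)^e.card) * ∏ j ∈ e, (X - C (f j)) := by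
  have h : ∀ j ∈ e, (C (f j) - X) = (-1 : ℝ[X]) * (X - C (f j)) := by intro j _; ring
  rw [Finset.prod_congr rfl h, Finset.prod_mul_distrib, Finset.prod_const]
  simp [map_pow]

lemma aux_monic_prod' {ι : Type*} (e : Finset ι) (f : ι → ℝ) :
    (∏ j ∈ e, (X - C (f j)) : ℝ[X]).Monic :=
  monic_prod_of_monic _ _ fun j _ => monic_X_sub_C (f j)

lemma aux_prod_ne_zero' {ι : Type*} (e : Finset ι) (f : ι → ℝ) :
    (∏ j ∈ e, (C (f j) - X) : ℝ[X]) ≠ 0 := by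
  rw [aux_neg_prod']
  refine mul_ne_zero ?_ (aux_monic_prod' e f).ne_zero
  have h1 : ((-1:ℝ)^e.card) ≠ 0 := by positivity
  simpa using h1

lemma aux_degree_prod' {ι : Type*} (e : Finset ι) (f : ι → ℝ) :
    (∏ j ∈ e, (C (f j) - X) : ℝ[X]).degree = e.card := by
  rw [degree_prod]
  have h : ∀ j ∈ e, (C (f j) - X : ℝ[X]).degree = 1 := by
    intro j _
    have : (C (f j) - X : ℝ[X]) = -(X - C (f j)) := by ring
    rw [this, degree_neg, degree_X_sub_C]
  rw [Finset.sum_congr rfl h, Finset.sum_const, nsmul_eq_mul, mul_one]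

lemma aux_lead_prod' {ι : Type*} (e : Finset ι) (f : ι → ℝ) :
    (∏ j ∈ e, (C (f j) - X) : ℝ[X]).leadingCoeff = (-1:ℝ)^e.card := by
  rw [aux_neg_prod', leadingCoeff_mul, leadingCoeff_C, (aux_monic_prod' e f).leadingCoeff, mul_one]

lemma aux_roots_prod' {ι : Type*} (e : Finset ι) (f : ι → ℝ) :
    (∏ j ∈ e, (C (f j) - X) : ℝ[X]).roots = e.val.map f := by
  rw [Polynomial.roots_prod _ _ (aux_prod_ne_zero' e f)]
  rw [show (fun j => (C (f j) - X : ℝ[X]).roots) = fun j => {f j} from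
    funext fun j => aux_roots_CsubX (f j)]
  exact Multiset.bind_singleton _ _

lemma aux_splits_prod' {ι : Type*} (e : Finset ι) (f : ι → ℝ) :
    Splits (∏ j ∈ e, (C (f j) - X)) := by
  apply Splits.prod
  intro j _
  apply Splits.of_degree_le_one
  have : (C (f j) - X : ℝ[X]) = -(X - C (f j)) := by ring
  rw [this, degree_neg, degree_X_sub_C]

lemma aux_map_erase' {α β : Type*} [DecidableEq α] [DecidableEq β] (f : α → β) (m : Multiset α)
    (i : α) (hi : i ∈ m) : (m.erase i).map f = (m.map f).erase (f i) := by
  conv_rhs => rw [← Multiset.cons_erase hi]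
  rw [Multiset.map_cons, Multiset.erase_cons_head]


lemma aux_neg_prod (e : Finset ℝ) :
    (∏ s ∈ e, (C s - X)) = C ((-1:ℝ)^e.card) * ∏ s ∈ e, (X - C s) := by
  have h : ∀ s ∈ e, (C s - X) = (-1 : ℝ[X]) * (X - C s) := by intro s _; ring
  rw [Finset.prod_congr rfl h, Finset.prod_mul_distrib, Finset.prod_const]
  simp [map_pow]

lemma aux_M_monic (e : Finset ℝ) : (∏ s ∈ e, (X - C s) : ℝ[X]).Monic :=
  monic_prod_of_monic _ _ fun s _ => monic_X_sub_C s

lemma aux_M_natDegree (e : Finset ℝ) : (∏ s ∈ e, (X - C s) : ℝ[X]).natDegree = e.card := by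
  rw [natDegree_prod _ _ (fun s _ => X_sub_C_ne_zero s)]
  simp

lemma aux_degree_prod (e : Finset ℝ) : (∏ s ∈ e, (C s - X) : ℝ[X]).degree = e.card := by
  rw [aux_neg_prod, degree_C_mul (by positivity : ((-1:ℝ)^e.card) ≠ 0)]
  rw [degree_eq_natDegree (aux_M_monic e).ne_zero, aux_M_natDegree e]

lemma aux_coeff_prod (e : Finset ℝ) : (∏ s ∈ e, (C s - X) : ℝ[X]).coeff e.card = (-1:ℝ)^e.card := by
  rw [aux_neg_prod, coeff_C_mul]
  have := (aux_M_monic e).coeff_natDegree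
  rw [aux_M_natDegree e] at this
  rw [this, mul_one]

lemma keyK (p : ℕ) (t : Finset ℝ) (hcard : t.card = p + 1) (w : ℝ → ℝ)
    (hw : ∀ v ∈ t, 0 < w v) :
    (∑ v ∈ t, C (w v) * ∏ s ∈ t.erase v, (C s - X)).degree = p ∧
    (∑ v ∈ t, C (w v) * ∏ s ∈ t.erase v, (C s - X)).leadingCoeff = (-1:ℝ)^p * ∑ v ∈ t, w v ∧
    Multiset.card (∑ v ∈ t, C (w v) * ∏ s ∈ t.erase v, (C s - X)).roots = p ∧
    (∀ x : ℝ, Multiset.countP (fun r => r < x)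
        (∑ v ∈ t, C (w v) * ∏ s ∈ t.erase v, (C s - X)).roots ≤ (t.filter (fun v => v < x)).card) ∧
    (∀ x : ℝ, (t.filter (fun v => v ≤ x)).card ≤
        Multiset.countP (fun r => r ≤ x) (∑ v ∈ t, C (w v) * ∏ s ∈ t.erase v, (C s - X)).roots + 1) := by
  set K : ℝ[X] := ∑ v ∈ t, C (w v) * ∏ s ∈ t.erase v, (C s - X) with hK
  have ht : t.Nonempty := Finset.card_pos.mp (by omega)
  have hsum : 0 < ∑ v ∈ t, w v := Finset.sum_pos hw ht
  have herase : ∀ v ∈ t, (t.erase v).card = p := by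
    intro v hv; rw [Finset.card_erase_of_mem hv, hcard]; omega
  -- coefficient at p
  have hcoeff : K.coeff p = (-1:ℝ)^p * ∑ v ∈ t, w v := by
    rw [hK, finset_sum_coeff, Finset.mul_sum]
    apply Finset.sum_congr rfl
    intro v hv
    rw [coeff_C_mul]
    have := aux_coeff_prod (t.erase v)
    rw [herase v hv] at this
    rw [this]; ring
  have hcoeffne : K.coeff p ≠ 0 := by
    rw [hcoeff]
    have : ((-1:ℝ)^p) ≠ 0 := by positivity
    positivity
  -- degree
  have hdegle : K.degree ≤ p := by
    rw [hK]
    refine le_trans (degree_sum_le _ _) ?_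
    apply Finset.sup_le
    intro v hv
    refine le_trans (degree_mul_le _ _) ?_
    have h1 := aux_degree_prod (t.erase v)
    rw [herase v hv] at h1
    rw [h1]
    calc (C (w v)).degree + (p:WithBot ℕ) ≤ 0 + (p:WithBot ℕ) := by
          exact add_le_add_left (degree_C_le (a := w v)) _
      _ = p := by simp
  have hdeg : K.degree = p := le_antisymm hdegle (le_degree_of_ne_zero hcoeffne)
  have hKne : K ≠ 0 := fun h => by simp [h] at hdeg
  have hnatdeg : K.natDegree = p := natDegree_eq_of_degree_eq_some hdeg
  have hlead : K.leadingCoeff = (-1:ℝ)^p * ∑ v ∈ t, w v := by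
    rw [leadingCoeff, hnatdeg, hcoeff]
  -- order iso
  set ν : Fin (p+1) → ℝ := fun s => (t.orderIsoOfFin hcard s : ℝ) with hνdef
  have hν : StrictMono ν := fun a b h => by
    exact_mod_cast (t.orderIsoOfFin hcard).strictMono h
  have hνt : ∀ s, ν s ∈ t := fun s => (t.orderIsoOfFin hcard s).2
  have hsurj : ∀ v ∈ t, ∃ s, ν s = v := by
    intro v hv
    obtain ⟨s, hs⟩ := (t.orderIsoOfFin hcard).surjective ⟨v, hv⟩
    exact ⟨s, by rw [hνdef]; exact congrArg Subtype.val hs⟩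
  have hcount : ∀ (P : ℝ → Prop) [DecidablePred P],
      (t.filter P).card = (univ.filter (fun s => P (ν s))).card := by
    intro P _
    rw [← Finset.card_image_of_injOn (f := ν) (hν.injective.injOn)]
    congr 1
    ext a
    simp only [Finset.mem_filter, Finset.mem_image, Finset.mem_univ, true_and]
    constructor
    · rintro ⟨ha, hPa⟩
      obtain ⟨s, hs⟩ := hsurj a ha
      exact ⟨s, ⟨hs ▸ hPa, hs⟩⟩
    · rintro ⟨s, hPs, rfl⟩
      exact ⟨hνt s, hPs⟩
  -- eval formula and sign
  have heval : ∀ x : ℝ, K.eval x = ∑ v ∈ t, w v * ∏ s ∈ t.erase v, (s - x) := by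
    intro x
    rw [hK, eval_finset_sum]
    apply Finset.sum_congr rfl
    intro v hv
    simp [eval_prod]
  have hsign : ∀ s : Fin (p+1), 0 < (-1:ℝ)^(s:ℕ) * K.eval (ν s) := by
    intro s
    rw [heval]
    rw [Finset.sum_eq_single_of_mem (ν s) (hνt s) ?_]
    · have hns : ν s ∉ t.erase (ν s) := Finset.notMem_erase _ _
      have h0 := aux_sign_prod (t.erase (ν s)) (ν s) hns
      have hfe : (t.erase (ν s)).filter (fun v => v < ν s) = t.filter (fun v => v < ν s) := by
        rw [Finset.filter_erase, Finset.erase_eq_of_notMem]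
        simp
      have hcf : (t.filter (fun v => v < ν s)).card = (s:ℕ) := by
        rw [hcount]
        have : (univ.filter (fun s' => ν s' < ν s)) = Finset.Iio s := by
          ext s'
          simp [hν.lt_iff_lt]
        rw [this, Fin.card_Iio]
      rw [hfe, hcf] at h0
      have hwpos := hw (ν s) (hνt s)
      have : (-1:ℝ)^(s:ℕ) * (w (ν s) * ∏ s' ∈ t.erase (ν s), (s' - ν s))
          = w (ν s) * ((-1:ℝ)^(s:ℕ) * ∏ s' ∈ t.erase (ν s), (s' - ν s)) := by ring
      rw [this]
      exact mul_pos hwpos h0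
    · intro v hv hne
      have : ν s ∈ t.erase v := Finset.mem_erase.mpr ⟨fun h => hne h.symm, hνt s⟩
      rw [Finset.prod_eq_zero this (by ring), mul_zero]
  -- roots via IVT
  have hmulneg : ∀ i : Fin p, K.eval (ν i.castSucc) * K.eval (ν i.succ) < 0 := by
    intro i
    have h1 := hsign i.castSucc
    have h2 := hsign i.succ
    rw [Fin.coe_castSucc] at h1
    rw [Fin.val_succ] at h2
    have hmul := mul_pos h1 h2
    have hpow : ((-1:ℝ)^(i:ℕ)) * ((-1:ℝ)^((i:ℕ)+1)) = -1 := by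
      rw [← pow_add]
      have hodd : Odd ((i:ℕ) + ((i:ℕ)+1)) := ⟨(i:ℕ), by ring⟩
      exact Odd.neg_one_pow hodd
    have hre : ((-1:ℝ)^(i:ℕ) * K.eval (ν i.castSucc)) * ((-1:ℝ)^((i:ℕ)+1) * K.eval (ν i.succ))
        = (((-1:ℝ)^(i:ℕ)) * ((-1:ℝ)^((i:ℕ)+1))) * (K.eval (ν i.castSucc) * K.eval (ν i.succ)) := by
      ring
    rw [hre, hpow] at hmul
    linarith
  have hex : ∀ i : Fin p, ∃ c, ν i.castSucc < c ∧ c < ν i.succ ∧ K.eval c = 0 := fun i =>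
    aux_root_between K (hν (Fin.castSucc_lt_succ : i.castSucc < i.succ)) (hmulneg i)
  choose u hu1 hu2 hu3 using hex
  have humono : StrictMono u := by
    intro i j hij
    calc u i < ν i.succ := hu2 i
      _ ≤ ν j.castSucc := hν.monotone (by
          rw [Fin.le_def]
          simp only [Fin.val_succ, Fin.coe_castSucc]
          exact Fin.lt_def.mp hij)
      _ < u j := hu1 j
  set m : Multiset ℝ := Multiset.map u Finset.univ.val with hm
  have hmnodup : m.Nodup := Multiset.Nodup.map humono.injective Finset.univ.nodup
  have hmem : ∀ a ∈ m, a ∈ K.roots := by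
    intro a ha
    obtain ⟨i, _, rfl⟩ := Multiset.mem_map.mp ha
    exact (mem_roots hKne).mpr (hu3 i)
  have hmle : m ≤ K.roots := by
    rw [Multiset.le_iff_count]
    intro a
    by_cases ha : a ∈ m
    · rw [Multiset.count_eq_one_of_mem hmnodup ha]
      exact Multiset.count_pos.mpr (hmem a ha)
    · rw [Multiset.count_eq_zero_of_notMem ha]
      exact Nat.zero_le _
  have hmcard : Multiset.card m = p := by simp [hm]
  have h1 := card_roots' K
  rw [hnatdeg] at h1
  have heq : m = K.roots := Multiset.eq_of_le_of_card_le hmle (by omega)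
  have hrootscard : Multiset.card K.roots = p := by rw [← heq, hmcard]
  have hcountroots : ∀ (P : ℝ → Prop) [DecidablePred P],
      Multiset.countP P K.roots = (univ.filter (fun i => P (u i))).card := by
    intro P _
    rw [← heq, hm, Multiset.countP_map]
    rfl
  refine ⟨hdeg, hlead, hrootscard, ?_, ?_⟩
  · intro x
    rw [hcountroots]
    apply Finset.card_le_card_of_injOn (fun i => ν i.castSucc)
    · intro i hi
      simp only [Finset.mem_coe, Finset.mem_filter, Finset.mem_univ, true_and] at hi ⊢
      exact ⟨hνt _, lt_trans (hu1 i) hi⟩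
    · intro i _ j _ hij
      exact Fin.castSucc_injective _ (hν.injective hij)
  · intro x
    rw [hcountroots]
    by_cases hq0 : (t.filter (fun v => v ≤ x)).card = 0
    · omega
    have hchar : ∀ s : Fin (p+1), ν s ≤ x ↔ (s:ℕ) < (t.filter (fun v => v ≤ x)).card := by
      intro s
      rw [hcount (fun v => v ≤ x)]
      constructor
      · intro hs
        have hsub : Finset.Iic s ⊆ univ.filter (fun s' => ν s' ≤ x) := by
          intro s' hs'
          simp only [Finset.mem_filter, Finset.mem_univ, true_and]
          exact le_trans (hν.monotone (Finset.mem_Iic.mp hs')) hs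
        have hcc := Finset.card_le_card hsub
        rw [Fin.card_Iic] at hcc
        omega
      · intro hs
        by_contra hx
        push_neg at hx
        have hsub : univ.filter (fun s' => ν s' ≤ x) ⊆ Finset.Iio s := by
          intro s' hs'
          simp only [Finset.mem_filter, Finset.mem_univ, true_and] at hs'
          rw [Finset.mem_Iio]
          by_contra hss
          push_neg at hss
          exact (not_le.mpr hx) (le_trans (hν.monotone hss) hs')
        have hcc := Finset.card_le_card hsub
        rw [Fin.card_Iio] at hcc
        omega
    have hqle : (t.filter (fun v => v ≤ x)).card ≤ p + 1 :=
      le_trans (Finset.card_le_card (Finset.filter_subset _ _)) (le_of_eq hcard)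
    obtain ⟨q', hq'⟩ : ∃ q'', (t.filter (fun v => v ≤ x)).card = q'' + 1 := ⟨(t.filter (fun v => v ≤ x)).card - 1, by omega⟩
    suffices h : q' ≤ (univ.filter (fun i => u i ≤ x)).card by omega
    have hq'p : q' ≤ p := by omega
    have hcc : (Finset.univ : Finset (Fin q')).card ≤ (univ.filter (fun i => u i ≤ x)).card := by
      apply Finset.card_le_card_of_injOn (fun (j : Fin q') => (⟨(j:ℕ), lt_of_lt_of_le j.2 hq'p⟩ : Fin p))
      · intro j _
        simp only [Finset.mem_coe, Finset.mem_filter, Finset.mem_univ, true_and]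
        refine le_trans (le_of_lt (hu2 _)) ?_
        rw [hchar]
        simp only [Fin.val_succ]
        omega
      · intro a _ b _ hab
        simpa [Fin.ext_iff] using hab
    simpa using hcc

end Aux

set_option maxHeartbeats 1000000 in
theorem stmt0 (n : ℕ) (hn : 2 ≤ n) (lam : Fin n → ℝ) (hlam : Monotone lam)
    (ξ : Fin n → ℝ) (hξ : ξ ≠ 0) :
    (IPoly n lam ξ).degree = (n - 1 : ℕ) ∧
    (IPoly n lam ξ).leadingCoeff = (-1 : ℝ) ^ (n - 1) * ∑ i, (ξ i) ^ 2 ∧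
    ((-1 : ℝ)) ^ (n - 1) * ∑ i, (ξ i) ^ 2 ≠ 0 ∧
    (∀ z : ℂ, aeval z (IPoly n lam ξ) = 0 → z.im = 0) ∧
    ((IPoly n lam ξ).roots.sort (· ≤ ·)).length = n - 1 ∧
    (∀ i : ℕ, ∀ hi : i + 1 < n,
      lam ⟨i, by omega⟩ ≤ ((IPoly n lam ξ).roots.sort (· ≤ ·)).getD i 0 ∧
      ((IPoly n lam ξ).roots.sort (· ≤ ·)).getD i 0 ≤ lam ⟨i + 1, hi⟩) := by
  classical
  obtain ⟨i₀, hi₀⟩ : ∃ i, ξ i ≠ 0 := Function.ne_iff.mp hξ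
  set S : Finset (Fin n) := Finset.univ.filter (fun i => ξ i ≠ 0) with hS
  have hi₀S : i₀ ∈ S := by simp [hS, hi₀]
  set t : Finset ℝ := S.image lam with ht
  have htne : t.Nonempty := ⟨lam i₀, Finset.mem_image_of_mem lam hi₀S⟩
  obtain ⟨p, hcard⟩ : ∃ p, t.card = p + 1 :=
    ⟨t.card - 1, by have := Finset.card_pos.mpr htne; omega⟩
  set w : ℝ → ℝ := fun v => ∑ i ∈ Finset.univ.filter (fun i => lam i = v), (ξ i)^2 with hwdef
  have hwpos : ∀ v ∈ t, 0 < w v := by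
    intro v hv
    obtain ⟨j, hjS, hj⟩ := Finset.mem_image.mp hv
    have hjx : ξ j ≠ 0 := by
      have := Finset.mem_filter.mp hjS
      simpa using this.2
    apply Finset.sum_pos' (fun i _ => sq_nonneg _)
    exact ⟨j, by simp [hj], by positivity⟩
  set rep : ℝ → Fin n := fun v =>
    if h : (Finset.univ.filter (fun i => lam i = v)).Nonempty
    then (Finset.univ.filter (fun i => lam i = v)).min' h
    else ⟨0, by omega⟩ with hrepdef
  have hlamrep : ∀ v ∈ t, lam (rep v) = v := by
    intro v hv
    obtain ⟨j, hjS, hj⟩ := Finset.mem_image.mp hv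
    have hne : (Finset.univ.filter (fun i => lam i = v)).Nonempty := ⟨j, by simp [hj]⟩
    have hmem := Finset.min'_mem _ hne
    simp only [hrepdef, dif_pos hne]
    exact (Finset.mem_filter.mp hmem).2
  set A : Finset (Fin n) := t.image rep with hA
  have hrepinj : Set.InjOn rep t := by
    intro a ha b hb h
    rw [← hlamrep a ha, ← hlamrep b hb, h]
  have hAcard : A.card = p + 1 := by rw [hA, Finset.card_image_of_injOn hrepinj, hcard]
  have hAn : p + 1 ≤ n := by
    have h := Finset.card_le_card (Finset.subset_univ A)
    rw [hAcard] at h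
    simpa using h
  have hmemA : ∀ i ∈ A, lam i ∈ t ∧ rep (lam i) = i := by
    intro i hi
    obtain ⟨v, hv, rfl⟩ := Finset.mem_image.mp hi
    rw [hlamrep v hv]
    exact ⟨hv, rfl⟩
  have hlaminjA : Set.InjOn lam A := by
    intro a ha b hb h
    rw [← (hmemA a ha).2, h, (hmemA b hb).2]
  have hPi : ∀ i : Fin n, PiPoly n lam i
      = (((Finset.univ.val.erase i).map lam).map (fun v => C v - X)).prod := by
    intro i
    rw [PiPoly, Finset.prod, Finset.erase_val, Multiset.map_map]
    rfl
  have hPival : ∀ i j : Fin n, lam i = lam j → PiPoly n lam i = PiPoly n lam j := by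
    intro i j hij
    rw [hPi i, hPi j,
      aux_map_erase' lam _ i (Finset.mem_val.mpr (Finset.mem_univ i)),
      aux_map_erase' lam _ j (Finset.mem_val.mpr (Finset.mem_univ j)), hij]
  set B : Polynomial ℝ := ∏ j ∈ Aᶜ, (C (lam j) - X) with hB
  set Kp : Polynomial ℝ := ∑ v ∈ t, C (w v) * ∏ s ∈ t.erase v, (C s - X) with hKp
  obtain ⟨hKdeg, hKlead, hKcard, hK4, hK5⟩ := keyK p t hcard w hwpos
  rw [← hKp] at hKdeg hKlead hKcard
  simp only [← hKp] at hK4 hK5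
  have hKne : Kp ≠ 0 := fun h => by rw [h] at hKdeg; simp at hKdeg
  have hKnat : Kp.natDegree = p := natDegree_eq_of_degree_eq_some hKdeg
  have himerase : ∀ v ∈ t, (A.erase (rep v)).image lam = t.erase v := by
    intro v hv
    ext x
    simp only [Finset.mem_image, Finset.mem_erase]
    constructor
    · rintro ⟨i, ⟨hirep, hiA⟩, rfl⟩
      refine ⟨?_, (hmemA i hiA).1⟩
      intro h
      exact hirep (by rw [← (hmemA i hiA).2, h])
    · rintro ⟨hxv, hxt⟩
      refine ⟨rep x, ⟨?_, Finset.mem_image_of_mem rep hxt⟩, hlamrep x hxt⟩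
      intro h
      exact hxv (by rw [← hlamrep x hxt, h, hlamrep v hv])
  have hPifact : ∀ v ∈ t, PiPoly n lam (rep v) = B * ∏ s ∈ t.erase v, (C s - X) := by
    intro v hv
    have hrA : rep v ∈ A := Finset.mem_image_of_mem rep hv
    have hsplit : Finset.univ.erase (rep v) = Aᶜ ∪ A.erase (rep v) := by
      ext j
      simp only [Finset.mem_erase, Finset.mem_univ, and_true, Finset.mem_union,
        Finset.mem_compl]
      constructor
      · intro hj
        by_cases hjA : j ∈ A
        · right; exact ⟨hj, hjA⟩
        · left; exact hjA
      · rintro (hj | ⟨hj1, _⟩)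
        · intro h; exact hj (h ▸ hrA)
        · exact hj1
    have hdisj : Disjoint Aᶜ (A.erase (rep v)) := by
      apply Finset.disjoint_left.mpr
      intro j hj1 hj2
      exact (Finset.mem_compl.mp hj1) (Finset.mem_of_mem_erase hj2)
    rw [PiPoly, hsplit, Finset.prod_union hdisj, ← hB]
    congr 1
    rw [← himerase v hv, Finset.prod_image
      (fun a ha b hb h => hlaminjA (Finset.mem_of_mem_erase ha) (Finset.mem_of_mem_erase hb) h)]
  have hIsum : IPoly n lam ξ = ∑ i ∈ S, C ((ξ i)^2) * PiPoly n lam i := by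
    rw [IPoly]
    symm
    apply Finset.sum_subset (Finset.subset_univ S)
    intro i _ hiS
    have hzero : ξ i = 0 := by
      by_contra h
      exact hiS (by simp [hS, h])
    simp [hzero]
  have hwfib : ∀ v ∈ t, ∑ i ∈ S.filter (fun i => lam i = v), (ξ i)^2 = w v := by
    intro v hv
    rw [hwdef]
    apply Finset.sum_subset
    · intro i hi
      simp only [Finset.mem_filter] at hi ⊢
      exact ⟨Finset.mem_univ i, hi.2⟩
    · intro i hi hni
      simp only [Finset.mem_filter] at hi hni
      have hz : ξ i = 0 := by
        by_contra h
        exact hni ⟨by simp [hS, h], hi.2⟩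
      simp [hz]
  have hfact : IPoly n lam ξ = B * Kp := by
    rw [hIsum, ← Finset.sum_fiberwise_of_maps_to (g := lam) (t := t)
      (fun i hi => Finset.mem_image_of_mem lam hi) (fun i => C ((ξ i)^2) * PiPoly n lam i),
      hKp, Finset.mul_sum]
    apply Finset.sum_congr rfl
    intro v hv
    have hstep : ∀ i ∈ S.filter (fun i => lam i = v),
        C ((ξ i)^2) * PiPoly n lam i = C ((ξ i)^2) * PiPoly n lam (rep v) := by
      intro i hi
      congr 1
      exact hPival i (rep v) (by rw [(Finset.mem_filter.mp hi).2, hlamrep v hv])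
    rw [Finset.sum_congr rfl hstep, ← Finset.sum_mul, ← map_sum C _ _, hwfib v hv,
      hPifact v hv]
    ring
  have hBdeg : B.degree = (Aᶜ.card : ℕ) := aux_degree_prod' _ _
  have hBne : B ≠ 0 := aux_prod_ne_zero' _ _
  have hcompl : Aᶜ.card = n - (p+1) := by rw [Finset.card_compl, hAcard]; simp
  have hIdeg : (IPoly n lam ξ).degree = ((n-1 : ℕ) : WithBot ℕ) := by
    rw [hfact, degree_mul, hBdeg, hKdeg, ← Nat.cast_add]
    congr 1
    omega
  have hIne : IPoly n lam ξ ≠ 0 := fun h => by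
    rw [h, degree_zero] at hIdeg
    exact absurd hIdeg (by simp)
  have hsumw : ∑ v ∈ t, w v = ∑ i, (ξ i)^2 := by
    have h2 : ∑ i, (ξ i)^2 = ∑ i ∈ Finset.univ.filter (fun i => lam i ∈ t), (ξ i)^2 := by
      symm
      apply Finset.sum_subset (Finset.filter_subset _ _)
      intro i _ hni
      have hz : ξ i = 0 := by
        by_contra h
        exact hni (Finset.mem_filter.mpr ⟨Finset.mem_univ i,
          Finset.mem_image_of_mem lam (by simp [hS, h])⟩)
      simp [hz]
    rw [h2, ← Finset.sum_fiberwise_of_maps_to (g := lam) (t := t)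
      (fun i hi => (Finset.mem_filter.mp hi).2) (fun i => (ξ i)^2)]
    apply Finset.sum_congr rfl
    intro v hv
    have hfe : Finset.filter (fun i => lam i = v) (Finset.univ.filter (fun i => lam i ∈ t))
        = Finset.univ.filter (fun i => lam i = v) := by
      ext i
      simp only [Finset.mem_filter, Finset.mem_univ, true_and]
      constructor
      · rintro ⟨_, h⟩; exact h
      · intro h; exact ⟨by rw [h]; exact hv, h⟩
    rw [hfe]
  have hIlead : (IPoly n lam ξ).leadingCoeff = (-1:ℝ)^(n-1) * ∑ i, (ξ i)^2 := by
    rw [hfact, leadingCoeff_mul, aux_lead_prod', hKlead, hsumw, hcompl, ← mul_assoc,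
      ← pow_add]
    congr 2
    omega
  have hsumpos : 0 < ∑ i, (ξ i)^2 :=
    Finset.sum_pos' (fun i _ => sq_nonneg _) ⟨i₀, Finset.mem_univ _, by positivity⟩
  have hne3 : (-1:ℝ)^(n-1) * ∑ i, (ξ i)^2 ≠ 0 := by
    have h1 : ((-1:ℝ)^(n-1)) ≠ 0 := by positivity
    exact mul_ne_zero h1 (ne_of_gt hsumpos)
  have hKsplits : Splits Kp :=
    splits_iff_card_roots.mpr (by rw [hKcard, hKnat])
  have hBsplits : Splits B := aux_splits_prod' _ _
  have hIsplits : Splits (IPoly n lam ξ) := by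
    rw [hfact]; exact hBsplits.mul hKsplits
  have hcomplex : ∀ z : ℂ, aeval z (IPoly n lam ξ) = 0 → z.im = 0 := by
    intro z hz
    rw [aeval_def, eval₂_eq_eval_map] at hz
    have hmapne : (IPoly n lam ξ).map (algebraMap ℝ ℂ) ≠ 0 := Polynomial.map_ne_zero hIne
    have hzmem : z ∈ ((IPoly n lam ξ).map (algebraMap ℝ ℂ)).roots :=
      (mem_roots hmapne).mpr hz
    rw [hIsplits.roots_map] at hzmem
    obtain ⟨r, _, rfl⟩ := Multiset.mem_map.mp hzmem
    simp
  have hIroots : (IPoly n lam ξ).roots = Aᶜ.val.map lam + Kp.roots := by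
    rw [hfact, roots_mul (by rw [← hfact]; exact hIne), ← aux_roots_prod' Aᶜ lam, hB]
  have hIrootscard : Multiset.card (IPoly n lam ξ).roots = n - 1 := by
    rw [hIroots, Multiset.card_add, Multiset.card_map, hKcard]
    have h0 : Multiset.card Aᶜ.val = Aᶜ.card := rfl
    rw [h0, hcompl]
    omega
  have hlen : ((IPoly n lam ξ).roots.sort (· ≤ ·)).length = n - 1 := by
    rw [Multiset.length_sort, hIrootscard]
  have hsortcoe : (((IPoly n lam ξ).roots.sort (· ≤ ·) : List ℝ) : Multiset ℝ)
      = (IPoly n lam ξ).roots := Multiset.sort_eq _ _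
  have hBcount : ∀ (P : ℝ → Prop) [DecidablePred P],
      Multiset.countP P (Aᶜ.val.map lam) = (Aᶜ.filter (fun j => P (lam j))).card := by
    intro P _
    rw [Multiset.countP_map]
    rfl
  refine ⟨hIdeg, hIlead, hne3, hcomplex, hlen, ?_⟩
  intro i hi
  have hsorted : ((IPoly n lam ξ).roots.sort (· ≤ ·)).Pairwise (· ≤ ·) :=
    Multiset.pairwise_sort _ _
  constructor
  · -- lower bound : lam i ≤ t_i
    set x := lam ⟨i, by omega⟩ with hx
    have hF : Finset.univ.filter (fun j : Fin n => (j:ℕ) < i) = Finset.Iio (⟨i, by omega⟩ : Fin n) := by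
      ext j
      simp [Finset.mem_Iio, Fin.lt_def]
    have hFcard : (Finset.univ.filter (fun j : Fin n => (j:ℕ) < i)).card = i := by
      rw [hF, Fin.card_Iio]
    have h1 : (Finset.univ.filter (fun j : Fin n => (j:ℕ) < i)).filter (fun j => j ∈ A)
        = A.filter (fun j : Fin n => (j:ℕ) < i) := by
      ext j
      simp only [Finset.mem_filter, Finset.mem_univ, true_and]
      exact and_comm
    have h2 : (Finset.univ.filter (fun j : Fin n => (j:ℕ) < i)).filter (fun j => ¬ (j ∈ A))
        = Aᶜ.filter (fun j : Fin n => (j:ℕ) < i) := by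
      ext j
      simp only [Finset.mem_filter, Finset.mem_univ, true_and, Finset.mem_compl]
      exact and_comm
    have hsplitc : (A.filter (fun j : Fin n => (j:ℕ) < i)).card
        + (Aᶜ.filter (fun j : Fin n => (j:ℕ) < i)).card = i := by
      rw [← h1, ← h2, Finset.card_filter_add_card_filter_not, hFcard]
    have hmono1 : Aᶜ.filter (fun j => lam j < x) ⊆ Aᶜ.filter (fun j : Fin n => (j:ℕ) < i) := by
      intro j hj
      rw [Finset.mem_filter] at hj ⊢
      refine ⟨hj.1, ?_⟩
      by_contra hji
      push_neg at hji
      have : x ≤ lam j := hlam (by rw [Fin.le_def]; exact hji)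
      linarith [hj.2]
    have hq : (t.filter (fun v => v < x)).card ≤ (A.filter (fun j : Fin n => (j:ℕ) < i)).card := by
      apply Finset.card_le_card_of_injOn rep
      · intro v hv
        rw [Finset.mem_coe, Finset.mem_filter] at hv ⊢
        refine ⟨Finset.mem_image_of_mem rep hv.1, ?_⟩
        by_contra hji
        push_neg at hji
        have hle : x ≤ lam (rep v) := hlam (by rw [Fin.le_def]; exact hji)
        rw [hlamrep v hv.1] at hle
        linarith [hv.2]
      · intro a ha b hb hab
        exact hrepinj (Finset.mem_filter.mp (Finset.mem_coe.mp ha)).1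
          (Finset.mem_filter.mp (Finset.mem_coe.mp hb)).1 hab
    have hcountlt : ((IPoly n lam ξ).roots.sort (· ≤ ·)).countP (fun a => decide (a < x))
        = (Aᶜ.filter (fun j => lam j < x)).card
          + Multiset.countP (fun r => r < x) Kp.roots := by
      rw [← Multiset.coe_countP, hsortcoe, hIroots, Multiset.countP_add, hBcount]
    have hK4x := hK4 x
    have hB1 := Finset.card_le_card hmono1
    apply aux_sorted_le_getD _ hsorted i (by rw [hlen]; omega)
    rw [hcountlt]
    omega
  · -- upper bound : t_i ≤ lam (i+1)
    set x := lam ⟨i+1, hi⟩ with hx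
    have hF : Finset.univ.filter (fun j : Fin n => (j:ℕ) ≤ i+1)
        = Finset.Iic (⟨i+1, hi⟩ : Fin n) := by
      ext j
      simp [Finset.mem_Iic, Fin.le_def]
    have hFcard : (Finset.univ.filter (fun j : Fin n => (j:ℕ) ≤ i+1)).card = i+2 := by
      rw [hF, Fin.card_Iic]
    have h1 : (Finset.univ.filter (fun j : Fin n => (j:ℕ) ≤ i+1)).filter (fun j => j ∈ A)
        = A.filter (fun j : Fin n => (j:ℕ) ≤ i+1) := by
      ext j
      simp only [Finset.mem_filter, Finset.mem_univ, true_and]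
      exact and_comm
    have h2 : (Finset.univ.filter (fun j : Fin n => (j:ℕ) ≤ i+1)).filter (fun j => ¬ (j ∈ A))
        = Aᶜ.filter (fun j : Fin n => (j:ℕ) ≤ i+1) := by
      ext j
      simp only [Finset.mem_filter, Finset.mem_univ, true_and, Finset.mem_compl]
      exact and_comm
    have hsplitc : (A.filter (fun j : Fin n => (j:ℕ) ≤ i+1)).card
        + (Aᶜ.filter (fun j : Fin n => (j:ℕ) ≤ i+1)).card = i+2 := by
      rw [← h1, ← h2, Finset.card_filter_add_card_filter_not, hFcard]
    have hmono1 : Aᶜ.filter (fun j : Fin n => (j:ℕ) ≤ i+1) ⊆ Aᶜ.filter (fun j => lam j ≤ x) := by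
      intro j hj
      rw [Finset.mem_filter] at hj ⊢
      exact ⟨hj.1, hlam (by rw [Fin.le_def]; exact hj.2)⟩
    have hq : (A.filter (fun j : Fin n => (j:ℕ) ≤ i+1)).card ≤ (t.filter (fun v => v ≤ x)).card := by
      apply Finset.card_le_card_of_injOn lam
      · intro j hj
        rw [Finset.mem_coe, Finset.mem_filter] at hj ⊢
        exact ⟨(hmemA j hj.1).1, hlam (by rw [Fin.le_def]; exact hj.2)⟩
      · intro a ha b hb hab
        exact hlaminjA (Finset.mem_filter.mp (Finset.mem_coe.mp ha)).1
          (Finset.mem_filter.mp (Finset.mem_coe.mp hb)).1 hab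
    have hcountle : ((IPoly n lam ξ).roots.sort (· ≤ ·)).countP (fun a => decide (a ≤ x))
        = (Aᶜ.filter (fun j => lam j ≤ x)).card
          + Multiset.countP (fun r => r ≤ x) Kp.roots := by
      rw [← Multiset.coe_countP, hsortcoe, hIroots, Multiset.countP_add, hBcount]
    have hK5x := hK5 x
    have hB1 := Finset.card_le_card hmono1
    apply aux_sorted_getD_le _ hsorted i
    rw [hcountle]
    omega
end

section
/- Let L be a real symmetric n×n matrix with eigenvalues λ_1 ≤ λ_2 ≤ … ≤ λ_n (listed with multiplicity), and let 1 ≤ r < n be such that λ_r < λ_{r+1}. Define the polynomials p(t) = ∏_{j=1}^{r} (t − λ_j) and q(t) = ∏_{j=r+1}^{n} (λ_j − t). Then the symmetric matrix C = p(L) + q(L) is positive definite. If moreover λ_1 > 0, then the symmetric matrix C̄ = (∏_{j=r+1}^{n} λ_j)^{-1} p(L) + (∏_{j=1}^{r} λ_j)^{-1} q(L) is also positive definite. -/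
open Polynomial Matrix

section aux

variable {n : ℕ}

-- conjugation by an orthogonal matrix as an algebra hom
noncomputable def conjAH (u : Matrix (Fin n) (Fin n) ℝ) (h1 : u * uᴴ = 1) (h2 : uᴴ * u = 1) :
    Matrix (Fin n) (Fin n) ℝ →ₐ[ℝ] Matrix (Fin n) (Fin n) ℝ where
  toFun A := u * A * uᴴ
  map_one' := by simp only [mul_one]; exact h1
  map_mul' A B := by
    show u * (A * B) * uᴴ = u * A * uᴴ * (u * B * uᴴ)
    have hmid : uᴴ * (u * (B * uᴴ)) = B * uᴴ := by rw [← mul_assoc, h2, one_mul]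
    simp only [mul_assoc, hmid]
  map_zero' := by simp
  map_add' A B := by simp [Matrix.mul_add, Matrix.add_mul]
  commutes' r := by
    simp only [Algebra.algebraMap_eq_smul_one]
    rw [Matrix.mul_smul, mul_one, Matrix.smul_mul, h1]

lemma aeval_unitary_conj (u : Matrix (Fin n) (Fin n) ℝ) (h1 : u * uᴴ = 1) (h2 : uᴴ * u = 1)
    (D : Matrix (Fin n) (Fin n) ℝ) (f : ℝ[X]) :
    aeval (u * D * uᴴ) f = u * aeval D f * uᴴ := by
  have := Polynomial.aeval_algHom_apply (conjAH u h1 h2) D f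
  simpa [conjAH] using this

lemma aeval_diagonal (d : Fin n → ℝ) (f : ℝ[X]) :
    aeval (Matrix.diagonal d) f = Matrix.diagonal (fun i => f.eval (d i)) := by
  have h2 : (aeval d f : Fin n → ℝ) = fun i => f.eval (d i) := by
    funext i
    have := Polynomial.aeval_algHom_apply (Pi.evalAlgHom ℝ (fun _ : Fin n => ℝ) i) d f
    set_option linter.unnecessarySimpa false in
    rw [← Polynomial.coe_aeval_eq_eval]; exact this.symm
  calc aeval (Matrix.diagonal d) f
      = aeval (Matrix.diagonalAlgHom ℝ d) f := rfl
    _ = Matrix.diagonalAlgHom ℝ (aeval d f) := Polynomial.aeval_algHom_apply _ d f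
    _ = Matrix.diagonal (aeval d f) := rfl
    _ = Matrix.diagonal (fun i => f.eval (d i)) := by rw [h2]

lemma unitary_conj_posDef (u : Matrix (Fin n) (Fin n) ℝ) (h1 : u * uᴴ = 1) (d : Fin n → ℝ)
    (hd : ∀ i, 0 < d i) :
    (u * Matrix.diagonal d * uᴴ).PosDef := by
  have hD : (Matrix.diagonal d).PosDef := Matrix.PosDef.diagonal hd
  have hrw : u * Matrix.diagonal d * uᴴ = (uᴴ)ᴴ * Matrix.diagonal d * uᴴ := by
    rw [Matrix.conjTranspose_conjTranspose]
  rw [posDef_iff_dotProduct_mulVec]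
  constructor
  · rw [hrw]
    exact Matrix.isHermitian_conjTranspose_mul_mul _ hD.isHermitian
  · intro x hx
    have hx' : uᴴ *ᵥ x ≠ 0 := by
      intro h
      apply hx
      have h3 : (u * uᴴ) *ᵥ x = 0 := by
        rw [← Matrix.mulVec_mulVec, h, Matrix.mulVec_zero]
      rwa [h1, Matrix.one_mulVec] at h3
    have := hD.dotProduct_mulVec_pos hx'
    rw [hrw]
    simpa only [star_mulVec, dotProduct_mulVec, vecMul_vecMul,
      Matrix.conjTranspose_conjTranspose] using this

lemma aeval_posDef (L : Matrix (Fin n) (Fin n) ℝ) (hL : L.IsHermitian) (f : ℝ[X])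
    (hf : ∀ i, 0 < f.eval (hL.eigenvalues i)) : (aeval L f).PosDef := by
  have hspec := hL.spectral_theorem
  set u : Matrix (Fin n) (Fin n) ℝ := ↑(hL.eigenvectorUnitary) with hu
  have h1 : u * uᴴ = 1 := by
    rw [← Matrix.star_eq_conjTranspose]
    exact Matrix.mem_unitaryGroup_iff.mp hL.eigenvectorUnitary.2
  have h2 : uᴴ * u = 1 := by
    rw [← Matrix.star_eq_conjTranspose]
    exact Matrix.mem_unitaryGroup_iff'.mp hL.eigenvectorUnitary.2
  have hd : Matrix.diagonal (RCLike.ofReal ∘ hL.eigenvalues)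
      = Matrix.diagonal hL.eigenvalues := by congr 1
  have hspec' : L = u * Matrix.diagonal hL.eigenvalues * uᴴ := by
    rw [← Matrix.star_eq_conjTranspose, ← hd]
    exact hspec
  rw [hspec', aeval_unitary_conj u h1 h2, aeval_diagonal]
  exact unitary_conj_posDef u h1 _ hf

lemma eigenvalue_eq_root (L : Matrix (Fin n) (Fin n) ℝ) (hL : L.IsHermitian)
    (lam : Fin n → ℝ) (hchar : L.charpoly = ∏ i, (X - C (lam i))) (i : Fin n) :
    ∃ j, hL.eigenvalues i = lam j := by
  set μ := hL.eigenvalues i with hμ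
  have hv := hL.mulVec_eigenvectorBasis i
  have hv0 : ⇑(hL.eigenvectorBasis i) ≠ 0 := (WithLp.ofLp_eq_zero 2).ne.2 <| hL.eigenvectorBasis.orthonormal.ne_zero i
  have hdet : (μ • (1 : Matrix (Fin n) (Fin n) ℝ) - L).det = 0 := by
    rw [← Matrix.exists_mulVec_eq_zero_iff]
    refine ⟨_, hv0, ?_⟩
    rw [Matrix.sub_mulVec, hv, Matrix.smul_mulVec, Matrix.one_mulVec, sub_self]
  have heval : L.charpoly.eval μ = (μ • (1 : Matrix (Fin n) (Fin n) ℝ) - L).det := by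
    rw [Matrix.charpoly, ← Polynomial.coe_evalRingHom, RingHom.map_det]
    congr 1
    ext a b
    by_cases hab : a = b
    · subst hab
      simp [charmatrix_apply_eq, Matrix.one_apply]
    · simp [charmatrix_apply_ne _ _ _ hab, Matrix.one_apply, hab]
  have h0 : (∏ j, (μ - lam j)) = 0 := by
    have h := heval.trans hdet
    rw [hchar] at h
    simpa [Polynomial.eval_prod] using h
  obtain ⟨j, _, hj⟩ := Finset.prod_eq_zero_iff.mp h0
  exact ⟨j, by linarith [sub_eq_zero.mp hj]⟩

end aux

theorem stmt11 (n : ℕ) (L : Matrix (Fin n) (Fin n) ℝ) (hL : L.IsSymm)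
    (lam : Fin n → ℝ) (hmono : Monotone lam)
    (hchar : L.charpoly = ∏ i, (X - C (lam i)))
    (r : ℕ) (hr1 : 1 ≤ r) (hrn : r < n)
    (hgap : lam ⟨r - 1, by omega⟩ < lam ⟨r, hrn⟩) :
    (Polynomial.aeval L
        (∏ j ∈ Finset.univ.filter (fun j : Fin n => (j : ℕ) < r), (X - C (lam j)))
      + Polynomial.aeval L
        (∏ j ∈ Finset.univ.filter (fun j : Fin n => ¬ (j : ℕ) < r),
          (C (lam j) - X))).PosDef ∧
    (0 < lam ⟨0, by omega⟩ →
      ((∏ j ∈ Finset.univ.filter (fun j : Fin n => ¬ (j : ℕ) < r), lam j)⁻¹ •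
          Polynomial.aeval L
            (∏ j ∈ Finset.univ.filter (fun j : Fin n => (j : ℕ) < r), (X - C (lam j)))
        + (∏ j ∈ Finset.univ.filter (fun j : Fin n => (j : ℕ) < r), lam j)⁻¹ •
          Polynomial.aeval L
            (∏ j ∈ Finset.univ.filter (fun j : Fin n => ¬ (j : ℕ) < r),
              (C (lam j) - X))).PosDef) := by
  have hL' : L.IsHermitian := by
    rw [Matrix.IsHermitian]
    ext a b
    rw [Matrix.conjTranspose_apply]
    simp only [star_trivial]
    exact congrFun (congrFun hL a) b |>.symm ▸ rfl
  set P : ℝ[X] := ∏ j ∈ Finset.univ.filter (fun j : Fin n => (j : ℕ) < r), (X - C (lam j)) with hP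
  set Q : ℝ[X] := ∏ j ∈ Finset.univ.filter (fun j : Fin n => ¬ (j : ℕ) < r), (C (lam j) - X) with hQ
  -- sign facts on the spectrum
  have key : ∀ k : Fin n, 0 ≤ P.eval (lam k) ∧ 0 ≤ Q.eval (lam k)
      ∧ (0 < P.eval (lam k) ∨ 0 < Q.eval (lam k)) := by
    intro k
    rw [hP, hQ]
    simp only [Polynomial.eval_prod, Polynomial.eval_sub, Polynomial.eval_X, Polynomial.eval_C]
    by_cases hk : (k : ℕ) < r
    · have hPz : (∏ j ∈ Finset.univ.filter (fun j : Fin n => (j : ℕ) < r),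
          (lam k - lam j)) = 0 := by
        apply Finset.prod_eq_zero (i := k) (by simp [hk])
        simp
      have hQp : 0 < ∏ j ∈ Finset.univ.filter (fun j : Fin n => ¬ (j : ℕ) < r),
          (lam j - lam k) := by
        apply Finset.prod_pos
        intro j hj
        simp only [Finset.mem_filter, Finset.mem_univ, true_and, not_lt] at hj
        have h1 : lam ⟨r, hrn⟩ ≤ lam j := hmono (by exact hj)
        have h2 : lam k ≤ lam ⟨r - 1, by omega⟩ := hmono (by simp only [Fin.le_def]; omega)
        linarith
      exact ⟨le_of_eq hPz.symm, le_of_lt hQp, Or.inr hQp⟩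
    · have hQz : (∏ j ∈ Finset.univ.filter (fun j : Fin n => ¬ (j : ℕ) < r),
          (lam j - lam k)) = 0 := by
        apply Finset.prod_eq_zero (i := k)
          (by simp only [Finset.mem_filter, Finset.mem_univ, true_and]; exact hk)
        simp
      have hPp : 0 < ∏ j ∈ Finset.univ.filter (fun j : Fin n => (j : ℕ) < r),
          (lam k - lam j) := by
        apply Finset.prod_pos
        intro j hj
        simp only [Finset.mem_filter, Finset.mem_univ, true_and] at hj
        have h1 : lam ⟨r, hrn⟩ ≤ lam k :=
          hmono (by simp only [Fin.le_def]; exact Nat.le_of_not_lt hk)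
        have h2 : lam j ≤ lam ⟨r - 1, by omega⟩ := hmono (by simp only [Fin.le_def]; omega)
        linarith
      exact ⟨le_of_lt hPp, le_of_eq hQz.symm, Or.inl hPp⟩
  have heig := eigenvalue_eq_root L hL' lam hchar
  constructor
  · rw [← map_add]
    apply aeval_posDef L hL'
    intro i
    obtain ⟨k, hk⟩ := heig i
    rw [hk, Polynomial.eval_add]
    obtain ⟨h1, h2, h3⟩ := key k
    rcases h3 with h | h <;> linarith
  · intro hpos
    have hlampos : ∀ j : Fin n, 0 < lam j := fun j =>
      lt_of_lt_of_le hpos (hmono (by simp [Fin.le_def]))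
    have hc1 : 0 < ∏ j ∈ Finset.univ.filter (fun j : Fin n => ¬ (j : ℕ) < r), lam j :=
      Finset.prod_pos fun j _ => hlampos j
    have hc2 : 0 < ∏ j ∈ Finset.univ.filter (fun j : Fin n => (j : ℕ) < r), lam j :=
      Finset.prod_pos fun j _ => hlampos j
    rw [← _root_.map_smul (aeval L), ← _root_.map_smul (aeval L), ← map_add]
    apply aeval_posDef L hL'
    intro i
    obtain ⟨k, hk⟩ := heig i
    rw [hk, Polynomial.eval_add, Polynomial.eval_smul, Polynomial.eval_smul]
    obtain ⟨h1, h2, h3⟩ := key k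
    have i1 := inv_pos.mpr hc1
    have i2 := inv_pos.mpr hc2
    simp only [smul_eq_mul]
    rcases h3 with h | h
    · have := mul_pos i1 h
      nlinarith [mul_nonneg i2.le h2]
    · have := mul_pos i2 h
      nlinarith [mul_nonneg i1.le h1]
end

section
/- Let u, v ∈ ℝ, set ρ² = u² + v², and let F > 0 and λ_1 > 0 be real numbers. Define the symmetric 2×2 matrices G = F·Id and Ḡ = (F / (λ_1 (λ_1 + λ_1 ρ² F)²)) · [[1 + F v², −F u v], [−F u v, 1 + F u²]]. Then G and Ḡ are positive definite, the matrix L(G,Ḡ) = (det Ḡ / det G)^{1/3} Ḡ⁻¹ G equals λ_1 · [[1 + F u², F u v], [F u v, 1 + F v²]], and its eigenvalues are λ_1 and λ_1(1 + ρ² F) = λ_1 + λ_1 ρ² F. -/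
open Polynomial

private lemma charpoly_fin_two' (M : Matrix (Fin 2) (Fin 2) ℝ) :
    M.charpoly = X ^ 2 - C M.trace * X + C M.det := by
  rw [Matrix.charpoly, Matrix.det_fin_two]
  simp [Matrix.charmatrix_apply_eq, Matrix.charmatrix_apply_ne, Matrix.trace_fin_two,
    Matrix.det_fin_two]
  ring

/-- `L(G,Ḡ) = (det Ḡ / det G)^{1/3} · Ḡ⁻¹ G` for real `2×2` matrices (the case
`n = 2` of `L = (det ḡ/det g)^{1/(n+1)} ḡ⁻¹ g`). -/
noncomputable def Lmat2 (G Gb : Matrix (Fin 2) (Fin 2) ℝ) : Matrix (Fin 2) (Fin 2) ℝ :=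
  ((Gb.det / G.det) ^ ((3 : ℝ))⁻¹) • (Gb⁻¹ * G)

theorem stmt13 (u v F l1 : ℝ) (hF : 0 < F) (hl1 : 0 < l1)
    (G Gb : Matrix (Fin 2) (Fin 2) ℝ)
    (hG : G = F • (1 : Matrix (Fin 2) (Fin 2) ℝ))
    (hGb : Gb = (F / (l1 * (l1 + l1 * (u ^ 2 + v ^ 2) * F) ^ 2)) •
      !![1 + F * v ^ 2, -(F * u * v); -(F * u * v), 1 + F * u ^ 2]) :
    G.PosDef ∧ Gb.PosDef ∧
    Lmat2 G Gb = l1 • !![1 + F * u ^ 2, F * u * v; F * u * v, 1 + F * v ^ 2] ∧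
    (Lmat2 G Gb).charpoly =
      (X - C l1) * (X - C (l1 + l1 * (u ^ 2 + v ^ 2) * F)) := by
  have hK : 0 < l1 + l1 * (u ^ 2 + v ^ 2) * F := by positivity
  set K : ℝ := l1 + l1 * (u ^ 2 + v ^ 2) * F with hKdef
  have hc : 0 < F / (l1 * K ^ 2) := by positivity
  set c : ℝ := F / (l1 * K ^ 2) with hcdef
  set M : Matrix (Fin 2) (Fin 2) ℝ :=
    !![1 + F * v ^ 2, -(F * u * v); -(F * u * v), 1 + F * u ^ 2] with hMdef
  set M' : Matrix (Fin 2) (Fin 2) ℝ :=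
    !![1 + F * u ^ 2, F * u * v; F * u * v, 1 + F * v ^ 2] with hM'def
  have hadj : M.adjugate = M' := by
    rw [hMdef, Matrix.adjugate_fin_two, hM'def]
    norm_num
  have hdetM : M.det = K / l1 := by
    rw [hMdef, Matrix.det_fin_two_of, hKdef]
    field_simp
    ring
  -- G is positive definite
  have hGpd : G.PosDef := by
    subst hG
    rw [Matrix.posDef_iff_dotProduct_mulVec]
    constructor
    · ext i j
      fin_cases i <;> fin_cases j <;>
        simp [Matrix.conjTranspose_apply, Matrix.one_apply]
    · intro x hx
      obtain ⟨i, hi⟩ := Function.ne_iff.mp hx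
      have hi' : x i ≠ 0 := by simpa using hi
      have h0 : 0 < x 0 ^ 2 + x 1 ^ 2 := by
        fin_cases i
        · have := pow_two_pos_of_ne_zero hi'; positivity
        · have := pow_two_pos_of_ne_zero hi'; positivity
      simp only [Matrix.smul_mulVec, Matrix.one_mulVec, dotProduct,
        Fin.sum_univ_two, Pi.smul_apply, smul_eq_mul, star_trivial]
      nlinarith
  have hGbpd : Gb.PosDef := by
    subst hGb
    rw [Matrix.posDef_iff_dotProduct_mulVec]
    constructor
    · ext i j
      fin_cases i <;> fin_cases j <;>
        simp [hMdef, Matrix.conjTranspose_apply, Matrix.smul_apply]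
    · intro x hx
      obtain ⟨i, hi⟩ := Function.ne_iff.mp hx
      have hi' : x i ≠ 0 := by simpa using hi
      have h0 : 0 < x 0 ^ 2 + x 1 ^ 2 := by
        fin_cases i
        · have := pow_two_pos_of_ne_zero hi'; positivity
        · have := pow_two_pos_of_ne_zero hi'; positivity
      simp [hMdef, Matrix.mulVec, dotProduct, Fin.sum_univ_two,
        Matrix.smul_apply, smul_eq_mul]
      have hsq : 0 ≤ (v * x 0 - u * x 1) ^ 2 := sq_nonneg _
      have key : 0 < (1 + F * v ^ 2) * x 0 ^ 2 - 2 * (F * u * v) * x 0 * x 1 +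
          (1 + F * u ^ 2) * x 1 ^ 2 := by nlinarith
      nlinarith [mul_pos hc key]
  refine ⟨hGpd, hGbpd, ?_⟩
  have hdetG : G.det = F ^ 2 := by
    subst hG
    simp [Matrix.det_smul]
  have hdetGb : Gb.det = c ^ 2 * (K / l1) := by
    rw [hGb, Matrix.det_smul, hdetM]
    simp only [Fintype.card_fin]
  have hGbinv : Gb⁻¹ = (l1 ^ 2 * K / F) • M' := by
    apply Matrix.inv_eq_right_inv
    rw [hGb, Matrix.smul_mul, Matrix.mul_smul, ← hadj, Matrix.mul_adjugate, hdetM,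
      smul_smul, smul_smul]
    have hone : c * (l1 ^ 2 * K / F) * (K / l1) = 1 := by
      rw [hcdef]
      field_simp
    rw [hone, one_smul]
  have hscal : (Gb.det / G.det) ^ ((3 : ℝ))⁻¹ = (l1 * K)⁻¹ := by
    have h1 : Gb.det / G.det = ((l1 * K)⁻¹) ^ (3 : ℕ) := by
      rw [hdetGb, hdetG, hcdef]
      field_simp
    rw [h1]
    have h2 : (0 : ℝ) ≤ (l1 * K)⁻¹ := by positivity
    have := Real.pow_rpow_inv_natCast h2 (n := 3) (by norm_num)
    simpa using this
  have hL : Lmat2 G Gb = l1 • M' := by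
    rw [Lmat2, hscal, hGbinv, hG, Matrix.mul_smul, Matrix.mul_one, smul_smul, smul_smul]
    congr 1
    field_simp
  refine ⟨hL, ?_⟩
  rw [hL, charpoly_fin_two']
  have htr : (l1 • M').trace = l1 + K := by
    simp [Matrix.trace_fin_two, hM'def, Matrix.smul_apply, hKdef]
    ring
  have hdet : (l1 • M').det = l1 * K := by
    rw [Matrix.det_smul, hM'def, Matrix.det_fin_two_of, hKdef]
    simp only [Fintype.card_fin]
    ring
  rw [htr, hdet, C_add, C_mul]
  ring
end

section
/- Let u, v ∈ ℝ, set ρ² = u² + v², and let λ_2 > 0 and F > 0 be real numbers with ρ² F < 1. Define the symmetric 2×2 matrices G = F·Id and Ḡ = (F / (λ_2 (λ_2 − λ_2 ρ² F)²)) · [[1 − F v², F u v], [F u v, 1 − F u²]]. Then G and Ḡ are positive definite, and the eigenvalues of the matrix L(G,Ḡ) = (det Ḡ / det G)^{1/3} Ḡ⁻¹ G are λ_2 − λ_2 ρ² F and λ_2. -/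
open Polynomial

set_option maxHeartbeats 1600000 in
theorem stmt14 (u v F l2 : ℝ) (hF : 0 < F) (hl2 : 0 < l2)
    (hsmall : (u ^ 2 + v ^ 2) * F < 1)
    (G Gb : Matrix (Fin 2) (Fin 2) ℝ)
    (hG : G = F • (1 : Matrix (Fin 2) (Fin 2) ℝ))
    (hGb : Gb = (F / (l2 * (l2 - l2 * (u ^ 2 + v ^ 2) * F) ^ 2)) •
      !![1 - F * v ^ 2, F * u * v; F * u * v, 1 - F * u ^ 2]) :
    G.PosDef ∧ Gb.PosDef ∧
    (Lmat2 G Gb).charpoly =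
      (X - C (l2 - l2 * (u ^ 2 + v ^ 2) * F)) * (X - C l2) := by
  set s : ℝ := 1 - (u ^ 2 + v ^ 2) * F with hs_def
  have hs : 0 < s := by simp [hs_def]; linarith
  have hc_eq : F / (l2 * (l2 - l2 * (u ^ 2 + v ^ 2) * F) ^ 2) = F / (l2 ^ 3 * s ^ 2) := by
    rw [hs_def]; ring_nf
  set c : ℝ := F / (l2 ^ 3 * s ^ 2) with hc_def
  have hc : 0 < c := by positivity
  have hGb' : Gb = c • !![1 - F * v ^ 2, F * u * v; F * u * v, 1 - F * u ^ 2] := by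
    rw [hGb, hc_eq]
  -- PosDef G
  have hGpd : G.PosDef := by
    rw [hG]
    refine Matrix.PosDef.of_dotProduct_mulVec_pos ?_ ?_
    · simp [Matrix.IsHermitian, Matrix.conjTranspose_smul, Matrix.conjTranspose_one]
    · intro x hx
      have hx2 : x 0 ≠ 0 ∨ x 1 ≠ 0 := by
        by_contra h
        push_neg at h
        exact hx (_root_.funext fun i => by fin_cases i <;> simp [h.1, h.2])
      simp only [Matrix.smul_mulVec, Matrix.one_mulVec, dotProduct,
        Fin.sum_univ_two, Pi.smul_apply, smul_eq_mul, star_trivial]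
      rcases hx2 with h | h <;>
        nlinarith [sq_nonneg (x 0), sq_nonneg (x 1), mul_self_pos.mpr h, hF]
  -- PosDef Gb
  have hGbpd : Gb.PosDef := by
    rw [hGb']
    refine Matrix.PosDef.of_dotProduct_mulVec_pos ?_ ?_
    · ext i j
      fin_cases i <;> fin_cases j <;>
        simp [Matrix.conjTranspose_apply]
    · intro x hx
      have hx2 : x 0 ≠ 0 ∨ x 1 ≠ 0 := by
        by_contra h
        push_neg at h
        exact hx (_root_.funext fun i => by fin_cases i <;> simp [h.1, h.2])
      simp only [Matrix.smul_mulVec, Matrix.mulVec, dotProduct,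
        Fin.sum_univ_two, Pi.smul_apply, smul_eq_mul, star_trivial, Matrix.smul_apply,
        Matrix.of_apply, Matrix.cons_val', Matrix.cons_val_zero, Matrix.cons_val_one,
        Matrix.head_cons, Matrix.empty_val', Matrix.cons_val_fin_one, Matrix.head_fin_const]
      have key : 0 < x 0 * ((1 - F * v ^ 2) * x 0 + F * u * v * x 1) +
          x 1 * (F * u * v * x 0 + (1 - F * u ^ 2) * x 1) := by
        have h1 : (v * x 0 - u * x 1) ^ 2 + (u * x 0 + v * x 1) ^ 2
            = (u ^ 2 + v ^ 2) * (x 0 ^ 2 + x 1 ^ 2) := by ring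
        have h2 : 0 < x 0 ^ 2 + x 1 ^ 2 := by
          rcases hx2 with h | h <;> nlinarith [sq_nonneg (x 0), sq_nonneg (x 1), mul_self_pos.mpr h]
        nlinarith [sq_nonneg (v * x 0 - u * x 1), sq_nonneg (u * x 0 + v * x 1),
          mul_pos hF h2, mul_lt_of_lt_one_left h2 hsmall]
      nlinarith [mul_pos hc key]
  refine ⟨hGpd, hGbpd, ?_⟩
  have hl2' : l2 ≠ 0 := hl2.ne'
  have hs' : s ≠ 0 := hs.ne'
  have hF' : F ≠ 0 := hF.ne'
  have hc' : c ≠ 0 := hc.ne'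
  -- inverse of Gb
  have hGbinv : Gb⁻¹ = (c * s)⁻¹ • !![1 - F * u ^ 2, -(F * u * v); -(F * u * v), 1 - F * v ^ 2] := by
    apply Matrix.inv_eq_right_inv
    rw [hGb']
    ext i j
    fin_cases i <;> fin_cases j <;>
      · simp [Matrix.mul_apply, Fin.sum_univ_two, Matrix.one_apply, hs_def]
        have hne : 1 - F * (u ^ 2 + v ^ 2) ≠ 0 := by intro h; apply hs'; rw [hs_def]; linarith
        field_simp
        ring
  -- determinants
  have hdetG : G.det = F ^ 2 := by
    rw [hG, Matrix.det_smul]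
    simp
  have hdetM : (!![1 - F * v ^ 2, F * u * v; F * u * v, 1 - F * u ^ 2]).det = s := by
    rw [Matrix.det_fin_two_of, hs_def]; ring
  have hdetGb : Gb.det = c ^ 2 * s := by
    rw [hGb', Matrix.det_smul, hdetM]
    norm_num
  have hrpow : (Gb.det / G.det) ^ ((3 : ℝ))⁻¹ = (l2 ^ 2 * s)⁻¹ := by
    have hbase : Gb.det / G.det = ((l2 ^ 2 * s)⁻¹) ^ (3 : ℕ) := by
      rw [hdetGb, hdetG, hc_def]
      field_simp
    rw [hbase]
    have h0 : (0:ℝ) ≤ (l2 ^ 2 * s)⁻¹ := by positivity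
    rw [show ((3:ℝ))⁻¹ = (((3:ℕ):ℝ))⁻¹ by norm_num]
    exact Real.pow_rpow_inv_natCast h0 (by norm_num)
  -- the matrix L
  have hL : Lmat2 G Gb = l2 • !![1 - F * u ^ 2, -(F * u * v); -(F * u * v), 1 - F * v ^ 2] := by
    rw [Lmat2, hrpow, hGbinv, hG]
    rw [Matrix.smul_mul, Matrix.mul_smul, Matrix.mul_one, smul_smul, smul_smul]
    congr 1
    rw [hc_def]
    field_simp
  rw [hL]
  -- charpoly
  rw [Matrix.charpoly, Matrix.det_fin_two]
  simp only [Matrix.charmatrix_apply_eq, Matrix.charmatrix_apply_ne _ _ _ (by decide : (0:Fin 2) ≠ 1),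
    Matrix.charmatrix_apply_ne _ _ _ (by decide : (1:Fin 2) ≠ 0), Matrix.smul_apply,
    Matrix.cons_val', Matrix.cons_val_zero, Matrix.cons_val_one, Matrix.head_cons,
    Matrix.empty_val', Matrix.cons_val_fin_one, Matrix.head_fin_const, Matrix.of_apply,
    smul_eq_mul]
  simp only [map_sub, map_mul, map_add, map_one, map_pow, map_neg]
  ring
end

section
/- Let u, v ∈ ℝ with (u, v) ≠ (0, 0), set ρ = √(u² + v²), and let 0 < a < b be real numbers. Put s = ρ (b + a)/(b − a), and define the symmetric 2×2 matrices G = (2 (b − a)/ρ) · Id and Ḡ = ((b − a)/(ρ a b))² · [[s − u, −v], [−v, s + u]]. Then G and Ḡ are positive definite, and the eigenvalues of the matrix L(G,Ḡ) = (det Ḡ / det G)^{1/3} Ḡ⁻¹ G are exactly a and b. -/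
open Polynomial

set_option maxHeartbeats 1000000 in
theorem stmt15 (u v a b ρ s : ℝ) (huv : ¬ (u = 0 ∧ v = 0))
    (hρ : ρ = Real.sqrt (u ^ 2 + v ^ 2))
    (ha : 0 < a) (hab : a < b)
    (hs : s = ρ * (b + a) / (b - a))
    (G Gb : Matrix (Fin 2) (Fin 2) ℝ)
    (hG : G = (2 * (b - a) / ρ) • (1 : Matrix (Fin 2) (Fin 2) ℝ))
    (hGb : Gb = ((b - a) / (ρ * a * b)) ^ 2 • !![s - u, -v; -v, s + u]) :
    G.PosDef ∧ Gb.PosDef ∧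
    (Lmat2 G Gb).charpoly = (X - C a) * (X - C b) := by
  have hb : 0 < b := ha.trans hab
  have hba : 0 < b - a := sub_pos.2 hab
  have hba0 : b - a ≠ 0 := hba.ne'
  have huv2 : 0 < u ^ 2 + v ^ 2 := by
    rcases not_and_or.mp huv with h | h <;> positivity
  have hρ0 : 0 < ρ := by rw [hρ]; exact Real.sqrt_pos.2 huv2
  have hρ2 : ρ ^ 2 = u ^ 2 + v ^ 2 := by rw [hρ]; exact Real.sq_sqrt huv2.le
  have hsρ : ρ < s := by
    rw [hs, lt_div_iff₀ hba]; nlinarith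
  have hs0 : 0 < s := hρ0.trans hsρ
  have hsba : s * (b - a) = ρ * (b + a) := by rw [hs]; field_simp
  have hs2 : s ^ 2 - ρ ^ 2 = 4 * a * b * ρ ^ 2 / (b - a) ^ 2 := by
    rw [eq_div_iff (by positivity)]
    linear_combination (s * (b - a) + ρ * (b + a)) * hsba
  have hs2pos : 0 < s ^ 2 - ρ ^ 2 := by nlinarith [mul_pos hρ0 hρ0, mul_pos hs0 hs0]
  -- opaque names for the scalar factors
  obtain ⟨k, hkdef⟩ : ∃ k : ℝ, k = ((b - a) / (ρ * a * b)) ^ 2 := ⟨_, rfl⟩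
  have hk0 : 0 < k := by rw [hkdef]; positivity
  have hGb' : Gb = k • !![s - u, -v; -v, s + u] := by rw [hGb, hkdef]
  obtain ⟨c, hcdef⟩ : ∃ c : ℝ, c = 2 * (b - a) / ρ := ⟨_, rfl⟩
  have hc0 : 0 < c := by rw [hcdef]; positivity
  have hG' : G = c • (1 : Matrix (Fin 2) (Fin 2) ℝ) := by rw [hG, hcdef]
  -- nonzero vectors have positive square sums
  have hxpos : ∀ x : Fin 2 → ℝ, x ≠ 0 → 0 < x 0 ^ 2 + x 1 ^ 2 := by
    intro x hx
    rcases Function.ne_iff.mp hx with ⟨i, hi⟩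
    replace hi : x i ≠ 0 := by simpa using hi
    have h2 : 0 < x i ^ 2 := by
      rw [← sq_abs]; exact pow_pos (abs_pos.2 hi) 2
    have hi01 : i = 0 ∨ i = 1 := by omega
    rcases hi01 with rfl | rfl <;> nlinarith [sq_nonneg (x 0), sq_nonneg (x 1)]
  have key : ∀ x0 x1 : ℝ, 0 < x0 ^ 2 + x1 ^ 2 →
      0 < (s - u) * x0 ^ 2 - 2 * v * x0 * x1 + (s + u) * x1 ^ 2 := by
    intro x0 x1 hx
    nlinarith [sq_nonneg (2 * u * x0 * x1 - v * (x0 ^ 2 - x1 ^ 2)),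
      mul_pos hρ0 hx, mul_pos (sub_pos.2 hsρ) hx, sq_nonneg (x0 ^ 2 + x1 ^ 2)]
  have hGpd : G.PosDef := by
    rw [hG']
    refine Matrix.PosDef.of_dotProduct_mulVec_pos ?_ ?_
    · ext i j
      rw [Matrix.conjTranspose_apply]
      fin_cases i <;> fin_cases j <;> simp [Matrix.one_apply]
    · intro x hx
      have hx' := hxpos x hx
      simp [dotProduct, Matrix.mulVec, Fin.sum_univ_two, Matrix.one_apply]
      nlinarith [mul_pos hc0 hx']
  have hGbpd : Gb.PosDef := by
    rw [hGb']
    refine Matrix.PosDef.of_dotProduct_mulVec_pos ?_ ?_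
    · ext i j
      rw [Matrix.conjTranspose_apply]
      fin_cases i <;> fin_cases j <;> simp [mul_comm]
    · intro x hx
      have hx' := hxpos x hx
      have hQ := key (x 0) (x 1) hx'
      simp [dotProduct, Matrix.mulVec, Fin.sum_univ_two]
      nlinarith [mul_pos hk0 hQ]
  refine ⟨hGpd, hGbpd, ?_⟩
  -- the inverse of Gb
  obtain ⟨w, hwdef⟩ : ∃ w : ℝ, w = (k * (s ^ 2 - ρ ^ 2))⁻¹ := ⟨_, rfl⟩
  have hkw0 : k * (s ^ 2 - ρ ^ 2) ≠ 0 := by positivity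
  have hwk : w * (k * (s ^ 2 - ρ ^ 2)) = 1 := by
    rw [hwdef]; exact inv_mul_cancel₀ hkw0
  have hGbinv : Gb⁻¹ = w • !![s + u, v; v, s - u] := by
    apply Matrix.inv_eq_right_inv
    rw [hGb']
    ext i j
    fin_cases i <;> fin_cases j <;>
      simp [Matrix.mul_apply, Fin.sum_univ_two, Matrix.one_apply] <;>
      linear_combination (norm := ring_nf) hwk - w * k * hρ2 <;>
      nlinarith [hρ2, hwk, congrArg (HMul.hMul (k * w)) hρ2]
  -- determinants
  have hdetG : G.det = c ^ 2 := by
    rw [hG', Matrix.det_smul, Matrix.det_one, Fintype.card_fin]; ring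
  have hdetGb : Gb.det = k ^ 2 * (s ^ 2 - ρ ^ 2) := by
    rw [hGb', Matrix.det_smul, Fintype.card_fin, Matrix.det_fin_two_of]
    linear_combination (k ^ 2) * hρ2
  have hratio : Gb.det / G.det = ((a * b)⁻¹) ^ (3 : ℕ) := by
    rw [hdetGb, hdetG, hs2, hkdef, hcdef]
    field_simp
    ring
  have hrpow : (Gb.det / G.det) ^ ((3 : ℝ))⁻¹ = (a * b)⁻¹ := by
    rw [hratio]
    have h3 := Real.pow_rpow_inv_natCast (x := (a * b)⁻¹) (n := 3) (by positivity) (by norm_num)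
    norm_num at h3 ⊢
    exact h3
  -- the matrix L
  have hr : (a * b)⁻¹ * (w * c) = (b - a) / (2 * ρ) := by
    rw [hwdef, hkdef, hcdef, hs2]
    field_simp
    ring
  have hL : Lmat2 G Gb = ((b - a) / (2 * ρ)) • !![s + u, v; v, s - u] := by
    rw [Lmat2, hrpow, hGbinv, hG', Matrix.smul_mul, Matrix.mul_smul, Matrix.mul_one,
      smul_smul, smul_smul, mul_assoc, hr]
  -- the characteristic polynomial
  obtain ⟨r, hrdef⟩ : ∃ r : ℝ, r = (b - a) / (2 * ρ) := ⟨_, rfl⟩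
  rw [hL, ← hrdef, Matrix.charpoly, Matrix.det_fin_two]
  have e00 : Matrix.charmatrix (r • !![s + u, v; v, s - u]) 0 0
      = X - C (r * (s + u)) := by
    rw [Matrix.charmatrix_apply_eq]; simp
  have e11 : Matrix.charmatrix (r • !![s + u, v; v, s - u]) 1 1
      = X - C (r * (s - u)) := by
    rw [Matrix.charmatrix_apply_eq]; simp
  have e01 : Matrix.charmatrix (r • !![s + u, v; v, s - u]) 0 1
      = - C (r * v) := by
    rw [Matrix.charmatrix_apply_ne _ _ _ (by decide)]; simp
  have e10 : Matrix.charmatrix (r • !![s + u, v; v, s - u]) 1 0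
      = - C (r * v) := by
    rw [Matrix.charmatrix_apply_ne _ _ _ (by decide)]; simp
  rw [e00, e11, e01, e10]
  have htr : r * (s + u) + r * (s - u) = a + b := by
    rw [hrdef]
    field_simp
    linear_combination 2 * hsba
  have hdet : r * (s + u) * (r * (s - u)) - r * v * (r * v) = a * b := by
    have hv : (s + u) * (s - u) - v * v = s ^ 2 - ρ ^ 2 := by linear_combination hρ2
    have : r ^ 2 * ((s + u) * (s - u) - v * v) = a * b := by
      rw [hv, hrdef, hs2]
      field_simp
      ring
    linear_combination this
  have expand : ((X : ℝ[X]) - C (r * (s + u))) * (X - C (r * (s - u)))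
        - - C (r * v) * - C (r * v)
      = X ^ 2 - C (r * (s + u) + r * (s - u)) * X
        + C (r * (s + u) * (r * (s - u)) - r * v * (r * v)) := by
    simp only [C_add, C_sub, C_mul]
    ring
  rw [expand, htr, hdet]
  simp only [C_add, C_mul]
  ring
end
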